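/- Let φ : M_n(F) → M_m(F) be a nonzero map satisfying φ(X ∘ Y) = φ(X) ∘ φ(Y) for all X, Y ∈ M_n(F) and φ(0) = 0. Then for every nonzero idempotent P ∈ M_n(F), rank(φ(P)) ≥ rank(P); in particular, m ≥ n. -/

import Mathlib

open Matrix

section Aux
variable {F : Type*} [Field F] {n m : ℕ}

theorem vmv_vmv (a b c d : Fin n → F) :
    vecMulVec a b * vecMulVec c d = (b ⬝ᵥ c) • vecMulVec a d := by
  ext i j
  simp only [vecMulVec_apply, Matrix.mul_apply, Matrix.smul_apply, dotProduct, Finset.sum_mul,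
    smul_eq_mul, Finset.mul_sum]
  congr 1; ext k; ring

theorem mul_vmv (A : Matrix (Fin n) (Fin n) F) (b c : Fin n → F) :
    A * vecMulVec b c = vecMulVec (A *ᵥ b) c := by
  ext i j
  simp only [vecMulVec_apply, Matrix.mul_apply, mulVec, dotProduct, Finset.sum_mul]
  congr 1; ext k; ring

theorem vmv_mul (A : Matrix (Fin n) (Fin n) F) (b c : Fin n → F) :
    vecMulVec b c * A = vecMulVec b (c ᵥ* A) := by
  ext i j
  simp only [vecMulVec_apply, Matrix.mul_apply, vecMul, dotProduct, Finset.mul_sum]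
  congr 1; ext k; ring

theorem vmv_mulVec (b c x : Fin n → F) :
    vecMulVec b c *ᵥ x = (c ⬝ᵥ x) • b := by
  funext i
  simp only [mulVec, dotProduct, vecMulVec_apply, Pi.smul_apply, smul_eq_mul, Finset.mul_sum]
  rw [Finset.sum_mul]
  congr 1; ext k; ring

theorem halfAddSelf (h2 : (2:F) ≠ 0) (X : Matrix (Fin n) (Fin n) F) :
    (2:F)⁻¹ • (X + X) = X := by
  rw [← two_smul F X, smul_smul, inv_mul_cancel₀ h2, one_smul]

theorem exists_dual {v : Fin n → F} (hv : v ≠ 0) : ∃ u : Fin n → F, u ⬝ᵥ v = 1 := by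
  obtain ⟨i, hi⟩ : ∃ i, v i ≠ 0 := by
    by_contra h; push_neg at h; exact hv (funext h)
  exact ⟨Pi.single i (v i)⁻¹, by simp [single_dotProduct, inv_mul_cancel₀ hi]⟩

theorem exists_mulVec_ne {A : Matrix (Fin n) (Fin n) F} (hA : A ≠ 0) :
    ∃ x, A *ᵥ x ≠ 0 := by
  by_contra h; push_neg at h
  apply hA; ext i j
  have := congrFun (h (Pi.single j 1)) i
  simpa using this

theorem smul2_cancel (h2 : (2:F) ≠ 0) {X Y : Matrix (Fin n) (Fin n) F}
    (h : (2:F) • X = (2:F) • Y) : X = Y := by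
  have := congrArg (fun Z => (2:F)⁻¹ • Z) h
  simpa [smul_smul, inv_mul_cancel₀ h2] using this

theorem jordan_absorb (h2 : (2:F) ≠ 0) {p q : Matrix (Fin n) (Fin n) F}
    (hp : p * p = p) (hq : q * q = q)
    (h : (2:F)⁻¹ • (q * p + p * q) = q) : p * q = q ∧ q * p = q := by
  have h' : q * p + p * q = (2:F) • q := by
    have := congrArg (fun Z => (2:F) • Z) h
    simpa [smul_smul, mul_inv_cancel₀ h2] using this
  have hl : q * p + q * (p * q) = (2:F) • q := by
    have := congrArg (fun Z => q * Z) h'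
    simpa [mul_add, ← mul_assoc, hq, mul_smul_comm] using this
  have hr : q * (p * q) + p * q = (2:F) • q := by
    have := congrArg (fun Z => Z * q) h'
    simpa [add_mul, mul_assoc, hq, smul_mul_assoc] using this
  have hcomm : q * p = p * q := by
    have h3 := hl.trans hr.symm
    rw [add_comm] at h3
    exact add_left_cancel h3
  have h2q : (2:F) • (p * q) = (2:F) • q := by
    rw [← h', hcomm, two_smul]
  have hpq : p * q = q := smul2_cancel h2 h2q
  exact ⟨hpq, hcomm.trans hpq⟩

theorem jordan_orth (h2 : (2:F) ≠ 0) {p q : Matrix (Fin n) (Fin n) F}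
    (hp : p * p = p) (hq : q * q = q)
    (h : (2:F)⁻¹ • (q * p + p * q) = 0) : q * p = 0 ∧ p * q = 0 := by
  have h' : q * p + p * q = 0 := by
    have := congrArg (fun Z => (2:F) • Z) h
    simpa [smul_smul, mul_inv_cancel₀ h2] using this
  have hl : q * p + q * (p * q) = 0 := by
    have := congrArg (fun Z => q * Z) h'
    simpa [mul_add, ← mul_assoc, hq] using this
  have hr : q * (p * q) + p * q = 0 := by
    have := congrArg (fun Z => Z * q) h'
    simpa [add_mul, mul_assoc, hq] using this
  have hcomm : q * p = p * q := by
    have h3 := hl.trans hr.symm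
    rw [add_comm] at h3
    exact add_left_cancel h3
  have : (2:F) • (q * p) = (2:F) • (0 : Matrix (Fin n) (Fin n) F) := by
    rw [smul_zero, two_smul]
    rw [← hcomm] at h'
    exact h'
  have h0 : q * p = 0 := smul2_cancel h2 this
  exact ⟨h0, hcomm ▸ h0⟩

theorem kill_step (h2 : (2:F) ≠ 0)
    (φ : Matrix (Fin n) (Fin n) F → Matrix (Fin m) (Fin m) F)
    (hφ : ∀ X Y : Matrix (Fin n) (Fin n) F,
      φ ((2 : F)⁻¹ • (X * Y + Y * X)) = (2 : F)⁻¹ • (φ X * φ Y + φ Y * φ X))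
    (J : Matrix (Fin n) (Fin n) F) (hJ : J * J = J) (hJ0 : J ≠ 0) (hφJ : φ J = 0)
    (hrk : J.rank < n) :
    ∃ J' : Matrix (Fin n) (Fin n) F, J' * J' = J' ∧ φ J' = 0 ∧ J.rank < J'.rank := by
  -- a vector v with J v = v, v ≠ 0
  obtain ⟨x, hx⟩ := exists_mulVec_ne hJ0
  set v : Fin n → F := J *ᵥ x with hv
  have hJv : J *ᵥ v = v := by rw [hv, mulVec_mulVec, hJ]
  have hv0 : v ≠ 0 := hx
  -- a vector w ≠ 0 with J w = 0
  have hker : ∃ w : Fin n → F, w ≠ 0 ∧ J *ᵥ w = 0 := by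
    have hrk' : Matrix.rank J = Module.finrank F (LinearMap.range J.mulVecLin) := rfl
    have hsum := LinearMap.finrank_range_add_finrank_ker J.mulVecLin
    rw [Module.finrank_pi] at hsum
    simp only [Fintype.card_fin] at hsum
    have : 0 < Module.finrank F (LinearMap.ker J.mulVecLin) := by omega
    have hne : LinearMap.ker J.mulVecLin ≠ ⊥ := by
      intro hbot
      rw [hbot, finrank_bot] at this
      omega
    obtain ⟨w, hw, hw0⟩ := (Submodule.ne_bot_iff _).mp hne
    exact ⟨w, hw0, by simpa [Matrix.mulVecLin_apply] using LinearMap.mem_ker.mp hw⟩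
  obtain ⟨w, hw0, hJw⟩ := hker
  have hwnr : w ∉ LinearMap.range J.mulVecLin := by
    rintro ⟨y, hy⟩
    apply hw0
    have : J *ᵥ w = w := by rw [← hy]; rw [Matrix.mulVecLin_apply, mulVec_mulVec, hJ]
    rw [← this, hJw]
  -- dual vectors
  obtain ⟨γ₀, hγ₀⟩ := exists_dual hw0
  obtain ⟨δ₀, hδ₀⟩ := exists_dual hv0
  set γ : Fin n → F := γ₀ ᵥ* (1 - J) with hγ
  set δ : Fin n → F := δ₀ ᵥ* J with hδ
  have hγJ : γ ᵥ* J = 0 := by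
    rw [hγ, vecMul_vecMul, sub_mul, one_mul, hJ, sub_self, vecMul_zero]
  have hδJ : δ ᵥ* J = δ := by rw [hδ, vecMul_vecMul, hJ]
  have hγw : γ ⬝ᵥ w = 1 := by
    rw [hγ, ← dotProduct_mulVec, sub_mulVec, one_mulVec, hJw, sub_zero, hγ₀]
  have hγv : γ ⬝ᵥ v = 0 := by
    rw [hγ, ← dotProduct_mulVec, sub_mulVec, one_mulVec, hJv, sub_self, dotProduct_zero]
  have hδv : δ ⬝ᵥ v = 1 := by rw [hδ, ← dotProduct_mulVec, hJv, hδ₀]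
  have hδw : δ ⬝ᵥ w = 0 := by rw [hδ, ← dotProduct_mulVec, hJw, dotProduct_zero]
  -- the four rank-one gadgets
  set vγ := vecMulVec v γ with hvγ
  set wδ := vecMulVec w δ with hwδ
  set vδ := vecMulVec v δ with hvδ
  set wγ := vecMulVec w γ with hwγ
  have Jvγ : J * vγ = vγ := by rw [hvγ, mul_vmv, hJv]
  have Jwδ : J * wδ = 0 := by rw [hwδ, mul_vmv, hJw]; ext i j; simp [vecMulVec_apply]
  have Jvδ : J * vδ = vδ := by rw [hvδ, mul_vmv, hJv]
  have Jwγ : J * wγ = 0 := by rw [hwγ, mul_vmv, hJw]; ext i j; simp [vecMulVec_apply]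
  have vγJ : vγ * J = 0 := by rw [hvγ, vmv_mul, hγJ]; ext i j; simp [vecMulVec_apply]
  have wδJ : wδ * J = wδ := by rw [hwδ, vmv_mul, hδJ]
  have vδJ : vδ * J = vδ := by rw [hvδ, vmv_mul, hδJ]
  have wγJ : wγ * J = 0 := by rw [hwγ, vmv_mul, hγJ]; ext i j; simp [vecMulVec_apply]
  -- products
  have t1 : vγ * vγ = 0 := by rw [hvγ, vmv_vmv, hγv, zero_smul]
  have t2 : vγ * wδ = vδ := by rw [hvγ, hwδ, hvδ, vmv_vmv, hγw, one_smul]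
  have t3 : vγ * vδ = 0 := by rw [hvγ, hvδ, vmv_vmv, hγv, zero_smul]
  have t4 : vγ * wγ = vγ := by rw [hvγ, hwγ, vmv_vmv, hγw, one_smul]
  have t5 : wδ * vγ = wγ := by rw [hwδ, hvγ, hwγ, vmv_vmv, hδv, one_smul]
  have t6 : wδ * wδ = 0 := by rw [hwδ, vmv_vmv, hδw, zero_smul]
  have t7 : wδ * vδ = wδ := by rw [hwδ, hvδ, vmv_vmv, hδv, one_smul]
  have t8 : wδ * wγ = 0 := by rw [hwδ, hwγ, vmv_vmv, hδw, zero_smul]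
  have t9 : vδ * vγ = vγ := by rw [hvδ, hvγ, vmv_vmv, hδv, one_smul]
  have t10 : vδ * wδ = 0 := by rw [hvδ, hwδ, vmv_vmv, hδw, zero_smul]
  have t11 : vδ * vδ = vδ := by rw [hvδ, vmv_vmv, hδv, one_smul]
  have t12 : vδ * wγ = 0 := by rw [hvδ, hwγ, vmv_vmv, hδw, zero_smul]
  have t13 : wγ * vγ = 0 := by rw [hwγ, hvγ, vmv_vmv, hγv, zero_smul]
  have t14 : wγ * wδ = wδ := by rw [hwγ, hwδ, vmv_vmv, hγw, one_smul]
  have t15 : wγ * vδ = 0 := by rw [hwγ, hvδ, vmv_vmv, hγv, zero_smul]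
  have t16 : wγ * wγ = wγ := by rw [hwγ, vmv_vmv, hγw, one_smul]
  -- M is killed
  set M := J + vγ + wδ with hM
  set X₁ := J + (2:F) • vγ + (2:F) • wδ with hX₁
  have hMX₁ : (2:F)⁻¹ • (J * X₁ + X₁ * J) = M := by
    rw [hX₁, hM]
    simp only [mul_add, add_mul, mul_smul_comm, smul_mul_assoc, hJ, Jvγ, Jwδ, vγJ, wδJ,
      smul_zero, add_zero, zero_add]
    rw [show J + (2:F) • vγ + (J + (2:F) • wδ) = (J + vγ + wδ) + (J + vγ + wδ) by
      module]
    exact halfAddSelf h2 _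
  have hφM : φ M = 0 := by
    rw [← hMX₁, hφ, hφJ, zero_mul, mul_zero, add_zero, smul_zero]
  -- J' is killed
  set J' := J + wγ with hJ'
  set X₂ := J + vγ + wδ - vδ - wγ with hX₂
  have hMX₂ : M * X₂ = J' := by
    rw [hM, hX₂, hJ']
    simp only [mul_add, add_mul, mul_sub, sub_mul, hJ, Jvγ, Jwδ, Jvδ, Jwγ, vγJ, wδJ, vδJ, wγJ,
      t1, t2, t3, t4, t5, t6, t7, t8, t9, t10, t11, t12, t13, t14, t15, t16]
    abel
  have hX₂M : X₂ * M = J' := by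
    rw [hM, hX₂, hJ']
    simp only [mul_add, add_mul, mul_sub, sub_mul, hJ, Jvγ, Jwδ, Jvδ, Jwγ, vγJ, wδJ, vδJ, wγJ,
      t1, t2, t3, t4, t5, t6, t7, t8, t9, t10, t11, t12, t13, t14, t15, t16]
    abel
  have hφJ' : φ J' = 0 := by
    have : (2:F)⁻¹ • (M * X₂ + X₂ * M) = J' := by
      rw [hMX₂, hX₂M]; exact halfAddSelf h2 _
    rw [← this, hφ, hφM, zero_mul, mul_zero, add_zero, smul_zero]
  -- J' idempotent
  have hJ'2 : J' * J' = J' := by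
    rw [hJ']
    simp only [mul_add, add_mul, hJ, Jwγ, wγJ, t16, add_zero, zero_add]
  -- rank increases
  have hJ'w : J' *ᵥ w = w := by
    rw [hJ', add_mulVec, hJw, hwγ, vmv_mulVec, hγw, one_smul, zero_add]
  have hrange : LinearMap.range J.mulVecLin < LinearMap.range J'.mulVecLin := by
    constructor
    · rintro y ⟨z, rfl⟩
      refine ⟨J *ᵥ z, ?_⟩
      rw [Matrix.mulVecLin_apply, Matrix.mulVecLin_apply, mulVec_mulVec]
      rw [show J' * J = J by rw [hJ', add_mul, hJ, wγJ, add_zero]]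
    · intro hle
      exact hwnr (hle ⟨w, by rw [Matrix.mulVecLin_apply, hJ'w]⟩)
  exact ⟨J', hJ'2, hφJ', Submodule.finrank_lt_finrank_of_lt hrange⟩

theorem idem_full_rank_eq_one {J : Matrix (Fin n) (Fin n) F} (hJ : J * J = J)
    (hrk : n ≤ J.rank) : J = 1 := by
  have hr : J.rank = Module.finrank F (LinearMap.range J.mulVecLin) := rfl
  have htop : LinearMap.range J.mulVecLin = ⊤ := by
    apply Submodule.eq_top_of_finrank_eq
    have hle := Submodule.finrank_le (LinearMap.range J.mulVecLin)
    rw [Module.finrank_pi] at *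
    simp only [Fintype.card_fin] at *
    omega
  have hid : ∀ y : Fin n → F, J *ᵥ y = y := by
    intro y
    obtain ⟨z, hz⟩ := LinearMap.range_eq_top.mp htop y
    rw [Matrix.mulVecLin_apply] at hz
    rw [← hz, mulVec_mulVec, hJ]
  ext i j
  have := congrFun (hid (Pi.single j 1)) i
  simp only [mulVec_single, mul_one] at this
  simpa [Matrix.one_apply, Pi.single_apply] using this

theorem kill (h2 : (2:F) ≠ 0)
    (φ : Matrix (Fin n) (Fin n) F → Matrix (Fin m) (Fin m) F)
    (hφ : ∀ X Y : Matrix (Fin n) (Fin n) F,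
      φ ((2 : F)⁻¹ • (X * Y + Y * X)) = (2 : F)⁻¹ • (φ X * φ Y + φ Y * φ X))
    (J : Matrix (Fin n) (Fin n) F) (hJ : J * J = J) (hJ0 : J ≠ 0) (hφJ : φ J = 0) :
    ∀ X, φ X = 0 := by
  have main : ∀ d : ℕ, ∀ J : Matrix (Fin n) (Fin n) F,
      J * J = J → J ≠ 0 → φ J = 0 → n ≤ J.rank + d → ∀ X, φ X = 0 := by
    intro d
    induction d with
    | zero =>
      intro J hJ hJ0 hφJ hle X
      have h1 : φ 1 = 0 := by rw [← idem_full_rank_eq_one hJ (by omega)]; exact hφJ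
      have : (2:F)⁻¹ • (X * 1 + 1 * X) = X := by
        rw [mul_one, one_mul]; exact halfAddSelf h2 X
      rw [← this, hφ, h1, mul_zero, zero_mul, add_zero, smul_zero]
    | succ d ih =>
      intro J hJ hJ0 hφJ hle X
      by_cases hcase : n ≤ J.rank + d
      · exact ih J hJ hJ0 hφJ hcase X
      · have hrk : J.rank < n := by omega
        obtain ⟨J', hJ'2, hφJ', hlt⟩ := kill_step h2 φ hφ J hJ hJ0 hφJ hrk
        have hJ'0 : J' ≠ 0 := by
          intro h0
          rw [h0, Matrix.rank_zero] at hlt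
          omega
        exact ih J' hJ'2 hJ'0 hφJ' (by omega) X
  exact main n J hJ hJ0 hφJ (by have := Nat.zero_le J.rank; omega)

/-- row-vector representation of a linear functional -/
theorem rowRep (f : (Fin n → F) →ₗ[F] F) : ∃ r : Fin n → F, ∀ x, r ⬝ᵥ x = f x := by
  refine ⟨fun i => f (Pi.single i 1), fun x => ?_⟩
  have hx : ∑ i, x i • (Pi.single i 1 : Fin n → F) = x := by
    funext j
    simp [Pi.single_apply]
  conv_rhs => rw [← hx]
  rw [map_sum]
  simp only [LinearMap.map_smul, smul_eq_mul]
  simp only [dotProduct]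
  congr 1; funext i; ring

theorem rank_le_of_idem (h2 : (2:F) ≠ 0)
    (φ : Matrix (Fin n) (Fin n) F → Matrix (Fin m) (Fin m) F)
    (hφ : ∀ X Y : Matrix (Fin n) (Fin n) F,
      φ ((2 : F)⁻¹ • (X * Y + Y * X)) = (2 : F)⁻¹ • (φ X * φ Y + φ Y * φ X))
    (hnz : φ ≠ 0) (h0 : φ 0 = 0)
    (P : Matrix (Fin n) (Fin n) F) (hP : P * P = P) (hP0 : P ≠ 0) :
    P.rank ≤ (φ P).rank := by
  classical
  set r := P.rank with hr
  have hUr : Module.finrank F (LinearMap.range P.mulVecLin) = r := rfl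
  set b := Module.finBasisOfFinrankEq F (LinearMap.range P.mulVecLin) hUr with hb
  set v : Fin r → (Fin n → F) := fun i => (b i : Fin n → F) with hvdef
  have hPv : ∀ i, P *ᵥ v i = v i := by
    intro i
    obtain ⟨z, hz⟩ := (b i).2
    rw [Matrix.mulVecLin_apply] at hz
    rw [hvdef]
    simp only
    rw [← hz, mulVec_mulVec, hP]
  have hv0 : ∀ i, v i ≠ 0 := by
    intro i hi
    exact b.ne_zero i (by ext : 1; exact hi)
  -- dual functionals
  have hdual : ∀ i, ∃ g : Fin n → F, ∀ j, g ⬝ᵥ v j = if i = j then 1 else 0 := by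
    intro i
    obtain ⟨G, hG⟩ := LinearMap.exists_extend (b.coord i)
    obtain ⟨g, hg⟩ := rowRep G
    refine ⟨g, fun j => ?_⟩
    have : G (v j) = b.coord i (b j) := by
      rw [← hG]; rfl
    rw [hg, this, Module.Basis.coord_apply, Module.Basis.repr_self, Finsupp.single_apply]
    simp [eq_comm]
  choose g hg using hdual
  set e : Fin r → Matrix (Fin n) (Fin n) F := fun i => vecMulVec (v i) (g i ᵥ* P) with he
  have hgPv : ∀ i j, (g i ᵥ* P) ⬝ᵥ v j = if i = j then 1 else 0 := by
    intro i j
    rw [← dotProduct_mulVec, hPv, hg]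
  have hee : ∀ i j, e i * e j = if i = j then e i else 0 := by
    intro i j
    by_cases hij : i = j
    · subst hij
      rw [he]; simp only
      rw [vmv_vmv, hgPv]
      simp
    · rw [he]; simp only
      rw [vmv_vmv, hgPv]
      simp [hij]
  have heP : ∀ i, e i * P = e i := by
    intro i
    rw [he]; simp only
    rw [vmv_mul, vecMul_vecMul, hP]
  have hPe : ∀ i, P * e i = e i := by
    intro i
    rw [he]; simp only
    rw [mul_vmv, hPv]
  have he0 : ∀ i, e i ≠ 0 := by
    intro i hei
    apply hv0 i
    have : e i *ᵥ v i = ((g i ᵥ* P) ⬝ᵥ v i) • v i := by rw [he]; simp only; rw [vmv_mulVec]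
    rw [hgPv, if_pos rfl, one_smul] at this
    rw [← this, hei, zero_mulVec]
  -- images
  set Q : Fin r → Matrix (Fin m) (Fin m) F := fun i => φ (e i) with hQ
  set p := φ P with hp
  have hidem : ∀ A : Matrix (Fin n) (Fin n) F, A * A = A → φ A * φ A = φ A := by
    intro A hA
    have harg : (2:F)⁻¹ • (A * A + A * A) = A := by rw [hA]; exact halfAddSelf h2 A
    have := hφ A A
    rw [harg] at this
    rw [← halfAddSelf h2 (φ A * φ A)]
    exact this.symm
  have hpidem : p * p = p := hidem P hP
  have hQidem : ∀ i, Q i * Q i = Q i := fun i => hidem (e i) (by rw [hee, if_pos rfl])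
  have hQ0 : ∀ i, Q i ≠ 0 := by
    intro i hQi
    apply hnz
    funext X
    exact kill h2 φ hφ (e i) (by rw [hee, if_pos rfl]) (he0 i) hQi X
  have horth : ∀ i j, i ≠ j → Q i * Q j = 0 := by
    intro i j hij
    have harg : (2:F)⁻¹ • (e i * e j + e j * e i) = 0 := by
      rw [hee, hee, if_neg hij, if_neg (Ne.symm hij), add_zero, smul_zero]
    have := hφ (e i) (e j)
    rw [harg, h0] at this
    exact (jordan_orth h2 (hQidem j) (hQidem i) this.symm).1
  have hdom : ∀ i, p * Q i = Q i := by
    intro i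
    have harg : (2:F)⁻¹ • (e i * P + P * e i) = e i := by
      rw [heP, hPe]; exact halfAddSelf h2 (e i)
    have := hφ (e i) P
    rw [harg] at this
    exact (jordan_absorb h2 hpidem (hQidem i) this.symm).1
  -- linear independence in range of p
  have hx : ∀ i, ∃ x, Q i *ᵥ x ≠ 0 := fun i => exists_mulVec_ne (hQ0 i)
  choose x hxne using hx
  set u : Fin r → (Fin m → F) := fun i => Q i *ᵥ x i with hu
  have hQu : ∀ i j, Q i *ᵥ u j = if i = j then u i else 0 := by
    intro i j
    rw [hu]
    simp only
    rw [mulVec_mulVec]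
    by_cases hij : i = j
    · subst hij; rw [hQidem, if_pos rfl]
    · rw [horth i j hij, if_neg hij, zero_mulVec]
  have humem : ∀ i, u i ∈ LinearMap.range p.mulVecLin := by
    intro i
    refine ⟨u i, ?_⟩
    rw [Matrix.mulVecLin_apply, hu]
    simp only
    rw [mulVec_mulVec, hdom]
  have hli : LinearIndependent F u := by
    rw [linearIndependent_iff']
    intro s c hsum i hi
    have happ : (Q i).mulVecLin (∑ j ∈ s, c j • u j) = 0 := by
      rw [hsum, map_zero]
    rw [map_sum] at happ
    simp only [LinearMap.map_smul, Matrix.mulVecLin_apply] at happ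
    have : ∑ j ∈ s, c j • (Q i *ᵥ u j) = c i • u i := by
      rw [Finset.sum_eq_single i]
      · rw [hQu, if_pos rfl]
      · intro j hj hji
        rw [hQu, if_neg (Ne.symm hji), smul_zero]
      · intro habs; exact absurd hi habs
    rw [this] at happ
    rcases smul_eq_zero.mp happ with h | h
    · exact h
    · exact absurd h (by rw [hu] at *; exact hxne i)
  -- conclude
  have hle : r ≤ Module.finrank F (LinearMap.range p.mulVecLin) := by
    let u' : Fin r → LinearMap.range p.mulVecLin := fun i => ⟨u i, humem i⟩
    have hli' : LinearIndependent F u' := by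
      apply LinearIndependent.of_comp (LinearMap.range p.mulVecLin).subtype
      exact hli
    simpa using hli'.fintype_card_le_finrank
  exact hle

end Aux

theorem stmt_11 {F : Type*} [Field F] (h2 : (2 : F) ≠ 0) (n m : ℕ)
    (φ : Matrix (Fin n) (Fin n) F → Matrix (Fin m) (Fin m) F)
    (hφ : ∀ X Y : Matrix (Fin n) (Fin n) F,
      φ ((2 : F)⁻¹ • (X * Y + Y * X)) = (2 : F)⁻¹ • (φ X * φ Y + φ Y * φ X))
    (hnz : φ ≠ 0) (h0 : φ 0 = 0) :
    (∀ P : Matrix (Fin n) (Fin n) F, P * P = P → P ≠ 0 → P.rank ≤ (φ P).rank) ∧ n ≤ m := by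
  have part1 : ∀ P : Matrix (Fin n) (Fin n) F, P * P = P → P ≠ 0 → P.rank ≤ (φ P).rank :=
    fun P hP hP0 => rank_le_of_idem h2 φ hφ hnz h0 P hP hP0
  refine ⟨part1, ?_⟩
  rcases Nat.eq_zero_or_pos n with hn | hn
  · omega
  · haveI : NeZero n := ⟨by omega⟩
    have hone : (1 : Matrix (Fin n) (Fin n) F) ≠ 0 := by
      intro h
      have := congrFun (congrFun h ⟨0, hn⟩) ⟨0, hn⟩
      rw [Matrix.one_apply_eq] at this
      simp at this
    have h1 := part1 1 (one_mul 1) hone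
    have hrk1 : (1 : Matrix (Fin n) (Fin n) F).rank = n := by
      rw [Matrix.rank_one, Fintype.card_fin]
    have hle : (φ 1).rank ≤ m := by
      have := Matrix.rank_le_card_width (φ 1)
      simpa using this
    omega
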